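/- arXiv:1602.07774 — 3 statements merged into one kernel-verified Lean document; each statement's English description precedes it below -/
import Mathlib

section
/- Let p < 0, let α_1, ..., α_N > 0, and let u_1, ..., u_N be unit vectors in ℝⁿ not concentrated on any closed hemisphere (i.e., there is no x ≠ 0 with x·u_k ≤ 0 for all k). Let P be a polytope containing the origin in its interior all of whose facet outer normals belong to {u_1,...,u_N}. Then there exists a unique point ξ(P) in the interior of P minimizing Φ_P(ξ) = Σ_{k=1}^N α_k (h(P,u_k) − ξ·u_k)^p over the interior of P. -/
open Set

/-- The support function of a set `K` in direction `v`. -/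
noncomputable def spt {n : ℕ} (K : Set (EuclideanSpace ℝ (Fin n)))
    (v : EuclideanSpace ℝ (Fin n)) : ℝ :=
  sSup ((fun x => (inner ℝ x v : ℝ)) '' K)

lemma strictConvexOn_rpow_neg {p : ℝ} (hp : p < 0) :
    StrictConvexOn ℝ (Ioi (0:ℝ)) (fun x : ℝ => x ^ p) := by
  apply strictConvexOn_of_deriv2_pos (convex_Ioi 0)
  · exact fun x hx => (Real.continuousAt_rpow_const x p (Or.inl (ne_of_gt hx))).continuousWithinAt
  · intro x hx
    rw [interior_Ioi] at hx
    have h2 : deriv^[2] (fun x : ℝ => x ^ p) x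
        = p * ((p - 1) * x ^ (p - 1 - 1)) := by
      simp only [Function.iterate_succ, Function.iterate_zero, Function.comp_apply, id]
      rw [Filter.EventuallyEq.deriv_eq (f := fun y => p * y ^ (p-1))]
      · rw [deriv_const_mul _ (Real.differentiableAt_rpow_const_of_ne _ (ne_of_gt hx)),
          Real.deriv_rpow_const x (p - 1)]
      · filter_upwards [Ioi_mem_nhds hx] with y hy using
          Real.deriv_rpow_const y p
    rw [h2]
    have : 0 < p * (p - 1) := mul_pos_of_neg_of_neg hp (by linarith)
    nlinarith [Real.rpow_pos_of_pos hx (p - 1 - 1)]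

/-- Existence and uniqueness of the interior minimizer ξ(P) of Φ_P for a polytope
P whose facet outer normals all belong to {u_1,...,u_N}. -/
theorem stmt2 (n N : ℕ) (p : ℝ) (hp : p < 0) (α : Fin N → ℝ) (hα : ∀ k, 0 < α k)
    (u : Fin N → EuclideanSpace ℝ (Fin n)) (hu : ∀ k, ‖u k‖ = 1)
    (hhemi : ∀ x : EuclideanSpace ℝ (Fin n), x ≠ 0 → ∃ k, 0 < (inner ℝ x (u k) : ℝ))
    (b : Fin N → ℝ) (P : Set (EuclideanSpace ℝ (Fin n)))
    (hP : P = ⋂ k, {x : EuclideanSpace ℝ (Fin n) | (inner ℝ x (u k) : ℝ) ≤ b k})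
    (hbd : Bornology.IsBounded P)
    (h0 : (0 : EuclideanSpace ℝ (Fin n)) ∈ interior P) :
    ∃! ξ₀ : EuclideanSpace ℝ (Fin n), ξ₀ ∈ interior P ∧
      IsMinOn (fun ξ => ∑ k, α k * (spt P (u k) - (inner ℝ ξ (u k) : ℝ)) ^ p)
        (interior P) ξ₀ := by
  set Φ : EuclideanSpace ℝ (Fin n) → ℝ :=
    fun ξ => ∑ k, α k * (spt P (u k) - (inner ℝ ξ (u k) : ℝ)) ^ p with hΦ
  rcases Nat.eq_zero_or_pos n with hn | hn
  · -- trivial case: the space is a subsingleton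
    subst hn
    haveI : Subsingleton (EuclideanSpace ℝ (Fin 0)) := ⟨fun a b => by ext i; exact i.elim0⟩
    refine ⟨0, ⟨h0, isMinOn_iff.mpr fun x _ => ?_⟩, fun y _ => Subsingleton.elim y 0⟩
    · rw [Subsingleton.elim x 0]
  -- main case
  haveI : Nonempty (Fin N) := by
    have hx : (EuclideanSpace.single (⟨0, hn⟩ : Fin n) (1:ℝ)) ≠ 0 := by
      intro h
      have := congrArg (fun f => f ⟨0, hn⟩) h
      simp [EuclideanSpace.single_apply] at this
    exact ⟨(hhemi _ hx).choose⟩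
  -- basic facts about spt
  have hPconv : Convex ℝ P := by
    rw [hP]
    exact convex_iInter fun k => convex_halfSpace_le
      ⟨fun x y => inner_add_left x y (u k), fun c x => real_inner_smul_left x (u k) c⟩ (b k)
  obtain ⟨R, hR⟩ := isBounded_iff_forall_norm_le.mp hbd
  have hBdd : ∀ k, BddAbove ((fun x => (inner ℝ x (u k) : ℝ)) '' P) := by
    refine fun k => ⟨R, ?_⟩
    rintro _ ⟨x, hx, rfl⟩
    calc (inner ℝ x (u k) : ℝ) ≤ ‖x‖ * ‖u k‖ := real_inner_le_norm x (u k)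
      _ ≤ R := by rw [hu k, mul_one]; exact hR x hx
  have hPle : ∀ k, ∀ x ∈ P, (inner ℝ x (u k) : ℝ) ≤ spt P (u k) :=
    fun k x hx => le_csSup (hBdd k) ⟨x, hx, rfl⟩
  have hA : ∀ ξ ∈ interior P, ∀ k, (inner ℝ ξ (u k) : ℝ) < spt P (u k) := by
    intro ξ hξ k
    obtain ⟨δ, hδ, hball⟩ := Metric.isOpen_iff.mp isOpen_interior ξ hξ
    have hy : ξ + (δ/2) • u k ∈ P := by
      apply interior_subset (hball ?_)
      rw [Metric.mem_ball, dist_eq_norm, add_sub_cancel_left, norm_smul, hu k]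
      rw [mul_one, Real.norm_eq_abs, abs_of_pos (by linarith : (0:ℝ) < δ/2)]
      linarith
    have h1 := hPle k _ hy
    rw [inner_add_left, real_inner_smul_left, real_inner_self_eq_norm_sq, hu k] at h1
    simp only [one_pow, mul_one] at h1
    linarith
  have hsle : ∀ k, spt P (u k) ≤ b k := by
    intro k
    have hne : ((fun x => (inner ℝ x (u k) : ℝ)) '' P).Nonempty :=
      ⟨_, ⟨0, interior_subset h0, rfl⟩⟩
    unfold spt
    refine csSup_le hne ?_
    rintro _ ⟨x, hx, rfl⟩
    rw [hP] at hx
    exact mem_iInter.mp hx k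
  have hspos : ∀ k, 0 < spt P (u k) := by
    intro k
    have := hA 0 h0 k
    simpa using this
  have hbase : ∀ ξ ∈ interior P, ∀ k, 0 < spt P (u k) - (inner ℝ ξ (u k) : ℝ) :=
    fun ξ hξ k => sub_pos.mpr (hA ξ hξ k)
  -- membership criterion for the interior
  have hIntMem : ∀ ξ : EuclideanSpace ℝ (Fin n),
      (∀ k, (inner ℝ ξ (u k) : ℝ) < b k) → ξ ∈ interior P := by
    intro ξ hξ
    have hopen : IsOpen {x : EuclideanSpace ℝ (Fin n) | ∀ k, (inner ℝ x (u k) : ℝ) < b k} := by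
      have he : {x : EuclideanSpace ℝ (Fin n) | ∀ k, (inner ℝ x (u k) : ℝ) < b k}
          = ⋂ k, {x : EuclideanSpace ℝ (Fin n) | (inner ℝ x (u k) : ℝ) < b k} := by ext x; simp
      rw [he]
      exact isOpen_iInter_of_finite fun k =>
        isOpen_lt (continuous_id.inner continuous_const) continuous_const
    exact interior_maximal
      (fun x hx => by rw [hP]; exact mem_iInter.mpr fun k => le_of_lt (hx k)) hopen hξ
  -- constants
  set m : ℝ := Φ 0 with hm
  have hmpos : 0 < m := by
    rw [hm, hΦ]
    apply Finset.sum_pos (fun k _ => ?_) Finset.univ_nonempty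
    exact mul_pos (hα k) (Real.rpow_pos_of_pos (by simpa using hspos k) p)
  set αmin : ℝ := Finset.univ.inf' Finset.univ_nonempty α with hαmin
  have hαminpos : 0 < αmin := by
    obtain ⟨k, _, hk⟩ := Finset.exists_mem_eq_inf' Finset.univ_nonempty α
    rw [hαmin, hk]; exact hα k
  have hαminle : ∀ k, αmin ≤ α k := fun k => Finset.inf'_le α (Finset.mem_univ k)
  set smin : ℝ := Finset.univ.inf' Finset.univ_nonempty (fun k => spt P (u k)) with hsmin
  have hsminpos : 0 < smin := by
    obtain ⟨k, _, hk⟩ := Finset.exists_mem_eq_inf' Finset.univ_nonempty (fun k => spt P (u k))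
    rw [hsmin, hk]; exact hspos k
  have hsminle : ∀ k, smin ≤ spt P (u k) :=
    fun k => Finset.inf'_le _ (Finset.mem_univ k)
  set ε0 : ℝ := (m / αmin + 1) ^ (1/p) with hε0
  have hcpos : 0 < m / αmin + 1 := by positivity
  have hε0pos : 0 < ε0 := Real.rpow_pos_of_pos hcpos _
  have hε0p : ε0 ^ p = m / αmin + 1 := by
    rw [hε0, ← Real.rpow_mul hcpos.le, one_div, inv_mul_cancel₀ (ne_of_lt hp), Real.rpow_one]
  set ε : ℝ := min ε0 smin with hε
  have hεpos : 0 < ε := lt_min hε0pos hsminpos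
  -- the compact set K
  set K : Set (EuclideanSpace ℝ (Fin n)) :=
    {x | ∀ k, (inner ℝ x (u k) : ℝ) ≤ spt P (u k) - ε} with hKdef
  have hK0 : (0 : EuclideanSpace ℝ (Fin n)) ∈ K := by
    intro k
    have : ε ≤ spt P (u k) := le_trans (min_le_right _ _) (hsminle k)
    simpa using this
  have hKsub : K ⊆ interior P := by
    intro x hx
    apply hIntMem
    intro k
    calc (inner ℝ x (u k) : ℝ) ≤ spt P (u k) - ε := hx k
      _ < spt P (u k) := by linarith
      _ ≤ b k := hsle k
  have hKclosed : IsClosed K := by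
    have he : K = ⋂ k, {x : EuclideanSpace ℝ (Fin n) |
        (inner ℝ x (u k) : ℝ) ≤ spt P (u k) - ε} := by ext x; simp [hKdef]
    rw [he]
    exact isClosed_iInter fun k =>
      isClosed_le (continuous_id.inner continuous_const) continuous_const
  have hKcpt : IsCompact K :=
    Metric.isCompact_of_isClosed_isBounded hKclosed
      (hbd.subset (fun x hx => interior_subset (hKsub hx)))
  have hΦcont : ContinuousOn Φ K := by
    rw [hΦ]
    apply continuousOn_finset_sum
    intro k _
    apply ContinuousOn.mul continuousOn_const
    apply ContinuousOn.rpow_const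
      ((continuous_const.sub (continuous_id.inner continuous_const)).continuousOn)
    intro x hx
    left
    have hε' : ε ≤ spt P (u k) - (inner ℝ x (u k) : ℝ) := by linarith [hx k]
    exact ne_of_gt (lt_of_lt_of_le hεpos hε')
  obtain ⟨ξ₀, hξ₀K, hminK⟩ := hKcpt.exists_isMinOn ⟨0, hK0⟩ hΦcont
  have hξ₀int : ξ₀ ∈ interior P := hKsub hξ₀K
  -- global minimality over the interior
  have hglobal : ∀ ξ ∈ interior P, Φ ξ₀ ≤ Φ ξ := by
    intro ξ hξ
    by_cases hK : ξ ∈ K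
    · exact isMinOn_iff.mp hminK ξ hK
    · have hk : ∃ k, spt P (u k) - ε < (inner ℝ ξ (u k) : ℝ) := by
        by_contra h
        push_neg at h
        exact hK fun k => by linarith [h k]
      obtain ⟨k, hk⟩ := hk
      have ht : 0 < spt P (u k) - (inner ℝ ξ (u k) : ℝ) := hbase ξ hξ k
      have htε : spt P (u k) - (inner ℝ ξ (u k) : ℝ) ≤ ε := by linarith
      have h1 : ε ^ p ≤ (spt P (u k) - (inner ℝ ξ (u k) : ℝ)) ^ p :=
        Real.rpow_le_rpow_of_nonpos ht htε hp.le
      have h2 : ε0 ^ p ≤ ε ^ p :=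
        Real.rpow_le_rpow_of_nonpos hεpos (min_le_left _ _) hp.le
      have h3 : αmin * ε0 ^ p ≤ α k * (spt P (u k) - (inner ℝ ξ (u k) : ℝ)) ^ p :=
        mul_le_mul (hαminle k) (le_trans h2 h1)
          (Real.rpow_nonneg hε0pos.le p) (hα k).le
      have h4 : αmin * ε0 ^ p = m + αmin := by
        rw [hε0p]; field_simp
      have h5 : α k * (spt P (u k) - (inner ℝ ξ (u k) : ℝ)) ^ p ≤ Φ ξ := by
        rw [hΦ]
        apply Finset.single_le_sum (f := fun j => α j * (spt P (u j) - (inner ℝ ξ (u j) : ℝ)) ^ p)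
          (fun j _ => ?_) (Finset.mem_univ k)
        exact mul_nonneg (hα j).le (Real.rpow_nonneg (hbase ξ hξ j).le p)
      have h6 : Φ ξ₀ ≤ m := isMinOn_iff.mp hminK 0 hK0
      linarith
  refine ⟨ξ₀, ⟨hξ₀int, isMinOn_iff.mpr hglobal⟩, ?_⟩
  -- uniqueness
  rintro ξ₁ ⟨hξ₁int, hmin₁⟩
  by_contra hne
  have hkey : ∃ k, (inner ℝ (ξ₁ - ξ₀) (u k) : ℝ) ≠ 0 := by
    obtain ⟨k, hk⟩ := hhemi (ξ₁ - ξ₀) (sub_ne_zero.mpr hne)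
    exact ⟨k, ne_of_gt hk⟩
  obtain ⟨k₀, hk₀⟩ := hkey
  set ξm : EuclideanSpace ℝ (Fin n) := (1/2 : ℝ) • ξ₁ + (1/2 : ℝ) • ξ₀ with hξm
  have hmidint : ξm ∈ interior P :=
    hPconv.interior hξ₁int hξ₀int (by norm_num) (by norm_num) (by norm_num)
  have hΦeq : Φ ξ₁ = Φ ξ₀ :=
    le_antisymm (isMinOn_iff.mp hmin₁ ξ₀ hξ₀int) (hglobal ξ₁ hξ₁int)
  have hbasem : ∀ k, spt P (u k) - (inner ℝ ξm (u k) : ℝ)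
      = (1/2 : ℝ) * (spt P (u k) - (inner ℝ ξ₁ (u k) : ℝ))
        + (1/2 : ℝ) * (spt P (u k) - (inner ℝ ξ₀ (u k) : ℝ)) := by
    intro k
    rw [hξm, inner_add_left, real_inner_smul_left, real_inner_smul_left]
    ring
  have hsc := strictConvexOn_rpow_neg hp
  have hterm_le : ∀ k, α k * (spt P (u k) - (inner ℝ ξm (u k) : ℝ)) ^ p
      ≤ (1/2 : ℝ) * (α k * (spt P (u k) - (inner ℝ ξ₁ (u k) : ℝ)) ^ p)
        + (1/2 : ℝ) * (α k * (spt P (u k) - (inner ℝ ξ₀ (u k) : ℝ)) ^ p) := by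
    intro k
    have h := hsc.convexOn.2 (mem_Ioi.mpr (hbase ξ₁ hξ₁int k))
      (mem_Ioi.mpr (hbase ξ₀ hξ₀int k))
      (by norm_num : (0:ℝ) ≤ 1/2) (by norm_num : (0:ℝ) ≤ 1/2) (by norm_num)
    simp only [smul_eq_mul] at h
    rw [hbasem k]
    nlinarith [hα k, h]
  have hterm_lt : α k₀ * (spt P (u k₀) - (inner ℝ ξm (u k₀) : ℝ)) ^ p
      < (1/2 : ℝ) * (α k₀ * (spt P (u k₀) - (inner ℝ ξ₁ (u k₀) : ℝ)) ^ p)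
        + (1/2 : ℝ) * (α k₀ * (spt P (u k₀) - (inner ℝ ξ₀ (u k₀) : ℝ)) ^ p) := by
    have hne' : spt P (u k₀) - (inner ℝ ξ₁ (u k₀) : ℝ)
        ≠ spt P (u k₀) - (inner ℝ ξ₀ (u k₀) : ℝ) := by
      intro h
      apply hk₀
      rw [inner_sub_left]
      linarith
    have h := hsc.2 (mem_Ioi.mpr (hbase ξ₁ hξ₁int k₀))
      (mem_Ioi.mpr (hbase ξ₀ hξ₀int k₀)) hne'
      (by norm_num : (0:ℝ) < 1/2) (by norm_num : (0:ℝ) < 1/2) (by norm_num)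
    simp only [smul_eq_mul] at h
    rw [hbasem k₀]
    nlinarith [hα k₀, h]
  have hsum : Φ ξm < (1/2 : ℝ) * Φ ξ₁ + (1/2 : ℝ) * Φ ξ₀ := by
    rw [hΦ]
    calc ∑ k, α k * (spt P (u k) - (inner ℝ ξm (u k) : ℝ)) ^ p
        < ∑ k, ((1/2 : ℝ) * (α k * (spt P (u k) - (inner ℝ ξ₁ (u k) : ℝ)) ^ p)
          + (1/2 : ℝ) * (α k * (spt P (u k) - (inner ℝ ξ₀ (u k) : ℝ)) ^ p)) :=
          Finset.sum_lt_sum (fun k _ => hterm_le k) ⟨k₀, Finset.mem_univ k₀, hterm_lt⟩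
      _ = (1/2 : ℝ) * ∑ k, α k * (spt P (u k) - (inner ℝ ξ₁ (u k) : ℝ)) ^ p
          + (1/2 : ℝ) * ∑ k, α k * (spt P (u k) - (inner ℝ ξ₀ (u k) : ℝ)) ^ p := by
          rw [Finset.sum_add_distrib, Finset.mul_sum, Finset.mul_sum]
  have := hglobal ξm hmidint
  rw [hΦeq] at hsum
  linarith
end

section
/- Let u_1, ..., u_m, u be unit vectors in ℝⁿ such that the convex hull Q of {u_1,...,u_m} contains the ball of radius r > 0 centered at the origin. Then there exist indices i_1, ..., i_n ∈ {1,...,m} and coefficients a_1, ..., a_n with 0 ≤ a_j ≤ 1/r such that u = a_1 u_{i_1} + ... + a_n u_{i_n}. -/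
open Metric

/-- If the convex hull of unit vectors u_1,...,u_m contains the ball of radius r
about the origin, then any unit vector is a combination of n of them with
coefficients in [0, 1/r]. -/
theorem stmt10 (n m : ℕ) (u : Fin m → EuclideanSpace ℝ (Fin n)) (hu : ∀ k, ‖u k‖ = 1)
    (v : EuclideanSpace ℝ (Fin n)) (hv : ‖v‖ = 1) (r : ℝ) (hr : 0 < r)
    (hball : closedBall (0 : EuclideanSpace ℝ (Fin n)) r ⊆ convexHull ℝ (Set.range u)) :
    ∃ (idx : Fin n → Fin m) (a : Fin n → ℝ),
      (∀ j, 0 ≤ a j ∧ a j ≤ 1 / r) ∧ v = ∑ j, a j • u (idx j) := by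
  classical
  -- trivial degenerate cases
  have hn : 1 ≤ n := by
    rcases Nat.eq_zero_or_pos n with h | h
    · subst h
      have hv0 : v = 0 := by ext i; exact i.elim0
      rw [hv0, norm_zero] at hv
      exact absurd hv.symm one_ne_zero
    · exact h
  have hm : 0 < m := by
    rcases Nat.eq_zero_or_pos m with h | h
    · subst h
      have : Set.range u = ∅ := Set.range_eq_empty u
      have h0 := hball (mem_closedBall_self hr.le)
      rw [this, convexHull_empty] at h0
      exact absurd h0 (Set.notMem_empty _)
    · exact h
  -- basic properties of Q
  set Q := convexHull ℝ (Set.range u) with hQdef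
  have hQconv : Convex ℝ Q := convex_convexHull ℝ _
  have hQcl : IsClosed Q := ((Set.finite_range u).isCompact_convexHull (𝕜 := ℝ)).isClosed
  have hQb : Q ⊆ closedBall (0 : EuclideanSpace ℝ (Fin n)) 1 := by
    apply convexHull_min _ (convex_closedBall _ _)
    rintro x ⟨k, rfl⟩
    simp [mem_closedBall, dist_zero_right, hu k]
  have hballint : ball (0 : EuclideanSpace ℝ (Fin n)) r ⊆ interior Q :=
    interior_maximal (ball_subset_closedBall.trans hball) isOpen_ball
  have h0 : (0 : EuclideanSpace ℝ (Fin n)) ∈ interior Q := hballint (mem_ball_self hr)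
  -- the furthest multiple of v inside Q
  set S : Set ℝ := {t : ℝ | 0 ≤ t ∧ t • v ∈ Q} with hSdef
  have hmemS : ∀ t ∈ S, t ≤ 1 := by
    rintro t ⟨ht0, htQ⟩
    have h1 := hQb htQ
    rw [mem_closedBall, dist_zero_right, norm_smul, Real.norm_of_nonneg ht0, hv, mul_one] at h1
    exact h1
  have hrS : r ∈ S := by
    refine ⟨hr.le, hball ?_⟩
    rw [mem_closedBall, dist_zero_right, norm_smul, Real.norm_of_nonneg hr.le, hv, mul_one]
  have hSne : S.Nonempty := ⟨r, hrS⟩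
  have hSbdd : BddAbove S := ⟨1, hmemS⟩
  have hScl : IsClosed S := by
    have h2 : S = Set.Ici (0:ℝ) ∩ (fun t : ℝ => t • v) ⁻¹' Q := rfl
    rw [h2]
    exact isClosed_Ici.inter (hQcl.preimage (by fun_prop))
  set t₀ := sSup S with ht₀def
  have ht₀S : t₀ ∈ S := hScl.csSup_mem hSne hSbdd
  have hrt₀ : r ≤ t₀ := le_csSup hSbdd hrS
  have ht₀pos : 0 < t₀ := hr.trans_le hrt₀
  set w : EuclideanSpace ℝ (Fin n) := t₀ • v with hw
  have hwQ : w ∈ Q := ht₀S.2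
  have hwni : w ∉ interior Q := by
    intro hwint
    obtain ⟨ε, hε, hball2⟩ := Metric.isOpen_iff.1 isOpen_interior w hwint
    have hmem : (t₀ + ε/2) • v ∈ Q := by
      apply interior_subset
      apply hball2
      rw [mem_ball, dist_eq_norm]
      have h3 : (t₀ + ε/2) • v - w = (ε/2) • v := by rw [hw]; module
      rw [h3, norm_smul, hv, mul_one, Real.norm_of_nonneg (by positivity)]
      linarith
    have : t₀ + ε/2 ≤ t₀ := le_csSup hSbdd ⟨by positivity, hmem⟩
    linarith
  -- supporting functional at w
  obtain ⟨f, hf⟩ := geometric_hahn_banach_open_point hQconv.interior isOpen_interior hwni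
  have hfw : 0 < f w := by have := hf 0 h0; simpa using this
  have hfle : ∀ x ∈ Q, f x ≤ f w := by
    intro x hx
    by_contra hlt
    push_neg at hlt
    have hfa : 0 < f x := hfw.trans hlt
    set θ : ℝ := (1 - f w / f x) / 2 with hθ
    have hfrac : f w / f x < 1 := (div_lt_one hfa).2 hlt
    have hfracpos : 0 < f w / f x := div_pos hfw hfa
    have hθpos : 0 < θ := by rw [hθ]; linarith
    have hθ1 : θ + (1 - θ) = 1 := by ring
    have hcombo : θ • (0 : EuclideanSpace ℝ (Fin n)) + (1 - θ) • x ∈ interior Q :=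
      hQconv.combo_interior_self_mem_interior h0 hx hθpos (by rw [hθ]; linarith) hθ1
    have hval := hf _ hcombo
    rw [map_add, map_smul, map_smul, map_zero, smul_zero, zero_add, smul_eq_mul] at hval
    have h1θ : 1 - θ = (1 + f w / f x) / 2 := by rw [hθ]; ring
    rw [h1θ] at hval
    have hcan : f w / f x * f x = f w := div_mul_cancel₀ _ hfa.ne'
    nlinarith [hval, hfa, hfw, hlt]
  -- w lies in the convex hull of the slice A
  set A : Set (EuclideanSpace ℝ (Fin n)) := {x | x ∈ Set.range u ∧ f x = f w} with hA
  have hwA : w ∈ convexHull ℝ A := by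
    have hwQ' := hwQ
    rw [hQdef, mem_convexHull_iff_exists_fintype] at hwQ'
    obtain ⟨ι, _, β, z, hβ0, hβ1, hz, hsum⟩ := hwQ'
    have hzle : ∀ i, f (z i) ≤ f w := fun i => hfle _ (subset_convexHull ℝ _ (hz i))
    have hkey : ∀ i ∈ Finset.univ (α := ι), β i * (f w - f (z i)) = 0 := by
      have hs : ∑ i, β i * (f w - f (z i)) = 0 := by
        have hfsum : f w = ∑ i, β i * f (z i) := by
          rw [← hsum, map_sum]
          simp [map_smul]
        simp only [mul_sub]
        rw [Finset.sum_sub_distrib, ← Finset.sum_mul, hβ1, one_mul, ← hfsum, sub_self]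
      exact (Finset.sum_eq_zero_iff_of_nonneg (fun i _ =>
        mul_nonneg (hβ0 i) (by linarith [hzle i]))).1 hs
    obtain ⟨i₀, hi₀⟩ : ∃ i, β i ≠ 0 := by
      by_contra hall
      push_neg at hall
      rw [Finset.sum_eq_zero (fun i _ => hall i)] at hβ1
      exact one_ne_zero hβ1.symm
    have hz0A : z i₀ ∈ Set.range u ∧ f (z i₀) = f w := by
      refine ⟨hz i₀, ?_⟩
      have := hkey i₀ (Finset.mem_univ _)
      rcases mul_eq_zero.1 this with h | h
      · exact absurd h hi₀
      · linarith
    set z' : ι → EuclideanSpace ℝ (Fin n) := fun i => if β i = 0 then z i₀ else z i with hz'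
    have hz'A : ∀ i, z' i ∈ A := by
      intro i
      rw [hz']
      by_cases h : β i = 0
      · show (if β i = 0 then z i₀ else z i) ∈ A
        rw [if_pos h]
        exact hz0A
      · simp only [h, if_false]
        refine ⟨hz i, ?_⟩
        have := hkey i (Finset.mem_univ _)
        rcases mul_eq_zero.1 this with h' | h'
        · exact absurd h' h
        · linarith
    have hsum' : ∑ i, β i • z' i = w := by
      rw [← hsum]
      apply Finset.sum_congr rfl
      intro i _
      by_cases h : β i = 0
      · simp [h]
      · simp [hz', h]
    exact mem_convexHull_of_exists_fintype β z' hβ0 hβ1 hz'A hsum'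
  -- Caratheodory with cardinality bound n
  obtain ⟨t, hts, hcard, hwt⟩ : ∃ t : Finset (EuclideanSpace ℝ (Fin n)),
      ↑t ⊆ A ∧ t.card ≤ n ∧ w ∈ convexHull ℝ (↑t : Set (EuclideanSpace ℝ (Fin n))) := by
    rw [convexHull_eq_union] at hwA
    simp only [Set.mem_iUnion] at hwA
    obtain ⟨t, hts, hai, hwt⟩ := hwA
    refine ⟨t, hts, ?_, hwt⟩
    have htne : t.Nonempty := by
      rcases t.eq_empty_or_nonempty with h | h
      · subst h; simp at hwt
      · exact h
    have hcard1 : 1 ≤ t.card := Finset.card_pos.2 htne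
    set g : EuclideanSpace ℝ (Fin n) →ₗ[ℝ] ℝ := (f : EuclideanSpace ℝ (Fin n) →ₗ[ℝ] ℝ) with hg
    have hgne : g ≠ 0 := by
      intro h
      have hwg : f w = g w := rfl
      rw [hwg, h] at hfw
      simp at hfw
    have hker : Module.finrank ℝ (LinearMap.ker g) = n - 1 := by
      have h1 : Module.finrank ℝ (LinearMap.range g) = 1 := by
        rw [LinearMap.range_eq_top.2 (LinearMap.surjective_of_ne_zero hgne)]
        simp
      have h2 := g.finrank_range_add_finrank_ker
      rw [h1, finrank_euclideanSpace_fin] at h2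
      omega
    have hspan : vectorSpan ℝ (Set.range ((↑) : t → EuclideanSpace ℝ (Fin n)))
        ≤ LinearMap.ker g := by
      rw [Subtype.range_coe, vectorSpan_def, Submodule.span_le]
      rintro x ⟨p, hp, q, hq, rfl⟩
      simp only [SetLike.mem_coe, LinearMap.mem_ker, vsub_eq_sub, map_sub]
      rw [show g p = f p from rfl, show g q = f q from rfl,
        (hts hp).2, (hts hq).2, sub_self]
    have hfr : Module.finrank ℝ (vectorSpan ℝ (Set.range ((↑) : t → EuclideanSpace ℝ (Fin n))))
        = t.card - 1 := by
      apply hai.finrank_vectorSpan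
      rw [Fintype.card_coe]
      omega
    have hle := Submodule.finrank_mono hspan
    rw [hfr, hker] at hle
    omega
  -- assemble the final combination
  have htsu : ↑t ⊆ Set.range u := fun x hx => (hts hx).1
  rw [Finset.convexHull_eq] at hwt
  obtain ⟨β, hβ0, hβ1, hcm⟩ := hwt
  rw [Finset.centerMass_eq_of_sum_1 _ _ hβ1] at hcm
  simp only [id] at hcm
  set k := t.card with hk
  set e : Fin k → {x // x ∈ t} := ⇑t.equivFin.symm with he
  have hchoice : ∀ y : {x // x ∈ t}, ∃ i, u i = (y : EuclideanSpace ℝ (Fin n)) := by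
    intro y
    exact htsu y.2
  choose ι' hι using hchoice
  set idx : Fin n → Fin m := fun j => if h : (j : ℕ) < k then ι' (e ⟨j, h⟩) else ⟨0, hm⟩ with hidx
  set a : Fin n → ℝ := fun j => if h : (j : ℕ) < k then β (e ⟨j, h⟩) / t₀ else 0 with ha
  have hβle : ∀ y ∈ t, β y ≤ 1 := by
    intro y hy
    rw [← hβ1]
    exact Finset.single_le_sum (fun i hi => hβ0 i hi) hy
  refine ⟨idx, a, ?_, ?_⟩
  · intro j
    rw [ha]
    by_cases h : (j : ℕ) < k
    · simp only [h, dif_pos]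
      constructor
      · exact div_nonneg (hβ0 _ (e ⟨j, h⟩).2) ht₀pos.le
      · exact div_le_div₀ zero_le_one (hβle _ (e ⟨j, h⟩).2) hr hrt₀
    · simp only [h, dif_neg, not_false_iff]
      constructor
      · rfl
      · positivity
  · set F : ℕ → EuclideanSpace ℝ (Fin n) := fun i =>
      if h : i < k then (β (e ⟨i, h⟩) / t₀) • ((e ⟨i, h⟩ : EuclideanSpace ℝ (Fin n))) else 0
      with hF
    have step1 : ∑ j : Fin n, a j • u (idx j) = ∑ j : Fin n, F (j : ℕ) := by
      apply Finset.sum_congr rfl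
      intro j _
      rw [hF, ha, hidx]
      by_cases h : (j : ℕ) < k
      · simp only [h, dif_pos, hι]
      · simp only [h, dif_neg, not_false_iff, zero_smul]
    have step2 : ∑ j : Fin n, F (j : ℕ) = ∑ i ∈ Finset.range n, F i :=
      Fin.sum_univ_eq_sum_range F n
    have step3 : ∑ i ∈ Finset.range n, F i = ∑ i ∈ Finset.range k, F i := by
      symm
      apply Finset.sum_subset (Finset.range_subset_range.2 hcard)
      intro x _ hnx
      rw [Finset.mem_range] at hnx
      exact dif_neg hnx
    have step4 : ∑ i ∈ Finset.range k, F i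
        = ∑ j : Fin k, (β (e j) / t₀) • ((e j : EuclideanSpace ℝ (Fin n))) := by
      rw [← Fin.sum_univ_eq_sum_range F k]
      apply Finset.sum_congr rfl
      intro j _
      rw [hF]
      simp only [Fin.is_lt, dif_pos, Fin.eta]
    have step5 : ∑ j : Fin k, (β (e j) / t₀) • ((e j : EuclideanSpace ℝ (Fin n)))
        = ∑ y : {x // x ∈ t}, (β y / t₀) • (y : EuclideanSpace ℝ (Fin n)) := by
      rw [he]
      exact Equiv.sum_comp t.equivFin.symm
        (fun y : {x // x ∈ t} => (β y / t₀) • (y : EuclideanSpace ℝ (Fin n)))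
    have step6 : ∑ y : {x // x ∈ t}, (β y / t₀) • (y : EuclideanSpace ℝ (Fin n))
        = ∑ y ∈ t, (β y / t₀) • y :=
      Finset.sum_coe_sort t (fun y => (β y / t₀) • y)
    have step7 : ∑ y ∈ t, (β y / t₀) • y = t₀⁻¹ • w := by
      rw [← hcm, Finset.smul_sum]
      apply Finset.sum_congr rfl
      intro y _
      rw [div_eq_inv_mul, mul_smul]
    rw [step1, step2, step3, step4, step5, step6, step7, hw, smul_smul,
      inv_mul_cancel₀ ht₀pos.ne', one_smul]
end

section
/- Let p < 0, α_1, ..., α_N > 0, and let u_1, ..., u_N be unit vectors in ℝⁿ not concentrated on a closed hemisphere, such that for every linear subspace X of ℝⁿ with 1 ≤ dim X ≤ n−1, the set {u_1,...,u_N} ∩ X is concentrated on a closed hemisphere of S^{n−1} ∩ X (i.e., there exists x ∈ X, x ≠ 0, with x·u ≤ 0 for all u ∈ {u_1,...,u_N} ∩ X). Then any sequence (P_m) of polytopes with volume V(P_m) = 1, origin in the interior, and facet outer normals among {u_1,...,u_N}, is uniformly bounded (has bounded diameter). -/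
open Set MeasureTheory Metric Filter Pointwise

/-- A finite family of unit vectors that meets every open half-space positively
admits a uniform positive-spanning constant. -/
lemma aux_pos_span {E : Type*} [NormedAddCommGroup E] [InnerProductSpace ℝ E]
    [FiniteDimensional ℝ E] [Nontrivial E] {ι : Type*} (s : Finset ι) (v : ι → E)
    (h : ∀ x : E, x ≠ 0 → ∃ k ∈ s, 0 < (inner ℝ x (v k) : ℝ)) :
    ∃ c : ℝ, 0 < c ∧ ∀ x : E, ∃ k ∈ s, c * ‖x‖ ≤ (inner ℝ x (v k) : ℝ) := by
  obtain ⟨x1, hx1⟩ := exists_ne (0 : E)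
  obtain ⟨k1, hk1, -⟩ := h x1 hx1
  by_contra hc
  push_neg at hc
  have key : ∀ i : ℕ, ∃ y : E, ‖y‖ = 1 ∧ ∀ k ∈ s, (inner ℝ y (v k) : ℝ) < 1 / (i + 1) := by
    intro i
    obtain ⟨x, hx⟩ := hc (1 / (i + 1)) (by positivity)
    have hx0 : x ≠ 0 := by
      rintro rfl
      have hlt := hx k1 hk1
      simp at hlt
    refine ⟨‖x‖⁻¹ • x, ?_, ?_⟩
    · rw [norm_smul, norm_inv, norm_norm, inv_mul_cancel₀ (norm_ne_zero_iff.2 hx0)]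
    · intro k hk
      have := hx k hk
      rw [real_inner_smul_left]
      have hxn : (0:ℝ) < ‖x‖ := norm_pos_iff.2 hx0
      calc ‖x‖⁻¹ * (inner ℝ x (v k) : ℝ) < ‖x‖⁻¹ * (1 / (i+1) * ‖x‖) := by
            apply mul_lt_mul_of_pos_left this (by positivity)
        _ = 1 / (i+1) := by field_simp
  choose y hy1 hy2 using key
  have hmem : ∀ i, y i ∈ sphere (0:E) 1 := by
    intro i; simpa [mem_sphere_iff_norm] using hy1 i
  obtain ⟨z, hz, φ, hφ, hconv⟩ := (isCompact_sphere (0:E) 1).tendsto_subseq hmem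
  have hz0 : z ≠ 0 := by
    intro hz0
    rw [hz0] at hz
    simp at hz
  obtain ⟨k, hk, hpos⟩ := h z hz0
  have hlim : Tendsto (fun i => (inner ℝ (y (φ i)) (v k) : ℝ)) atTop (nhds (inner ℝ z (v k) : ℝ)) :=
    ((Continuous.inner continuous_id continuous_const).tendsto z).comp hconv
  have hle : (inner ℝ z (v k) : ℝ) ≤ 0 := by
    refine le_of_tendsto_of_tendsto hlim tendsto_one_div_add_atTop_nhds_zero_nat ?_
    filter_upwards with i
    have h1 := hy2 (φ i) k hk
    have h2 : (1:ℝ) / (φ i + 1) ≤ 1 / (i + 1) := by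
      apply one_div_le_one_div_of_le (by positivity)
      have h3 := hφ.le_apply (x := i)
      have h4 : (i:ℝ) ≤ (φ i : ℝ) := Nat.cast_le.2 h3
      linarith
    exact (h1.trans_le h2).le
  linarith

set_option maxHeartbeats 2000000 in
/-- Boundedness of volume-one polytopes with facet normals among {u_1,...,u_N},
when the measure has no essential subspace. -/
theorem stmt14 (n N : ℕ) (p : ℝ) (hp : p < 0) (α : Fin N → ℝ) (hα : ∀ k, 0 < α k)
    (u : Fin N → EuclideanSpace ℝ (Fin n)) (hu : ∀ k, ‖u k‖ = 1)
    (hhemi : ∀ x : EuclideanSpace ℝ (Fin n), x ≠ 0 → ∃ k, 0 < (inner ℝ x (u k) : ℝ))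
    (hnoess : ∀ X : Submodule ℝ (EuclideanSpace ℝ (Fin n)),
      1 ≤ Module.finrank ℝ X → Module.finrank ℝ X ≤ n - 1 →
      ∃ x ∈ X, x ≠ 0 ∧ ∀ k, u k ∈ X → (inner ℝ x (u k) : ℝ) ≤ 0)
    (P : ℕ → Set (EuclideanSpace ℝ (Fin n))) (b : ℕ → Fin N → ℝ)
    (hPdef : ∀ m, P m = ⋂ k, {x : EuclideanSpace ℝ (Fin n) | (inner ℝ x (u k) : ℝ) ≤ b m k})
    (hPbd : ∀ m, Bornology.IsBounded (P m))
    (hP0 : ∀ m, (0 : EuclideanSpace ℝ (Fin n)) ∈ interior (P m))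
    (hvol : ∀ m, volume (P m) = 1) :
    ∃ R : ℝ, ∀ m, P m ⊆ closedBall 0 R := by
  classical
  rcases Nat.eq_zero_or_pos n with hn | hn
  · subst hn
    refine ⟨0, fun m x hx => ?_⟩
    have hx0 : x = 0 := Subsingleton.elim x 0
    simp [hx0]
  haveI : Nontrivial (EuclideanSpace ℝ (Fin n)) := by
    refine nontrivial_of_ne (EuclideanSpace.single ⟨0, hn⟩ (1:ℝ)) 0 ?_
    intro h
    have := congrArg norm h
    rw [EuclideanSpace.norm_single] at this
    simp at this
  -- the b's are nonnegative
  have hb0 : ∀ m k, 0 ≤ b m k := by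
    intro m k
    have h0P : (0 : EuclideanSpace ℝ (Fin n)) ∈ P m := interior_subset (hP0 m)
    rw [hPdef m] at h0P
    have := Set.mem_iInter.1 h0P k
    simpa using this
  -- global positive-spanning constant
  obtain ⟨c, hc, hcs⟩ := aux_pos_span (Finset.univ) u
    (fun x hx => by obtain ⟨k, hk⟩ := hhemi x hx; exact ⟨k, Finset.mem_univ k, hk⟩)
  by_contra hcon
  push_neg at hcon
  have hseq : ∀ j : ℕ, ∃ m, ∃ x ∈ P m, (j + 1 : ℝ) < ‖x‖ := by
    intro j
    obtain ⟨m, hm⟩ := hcon (j + 1)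
    obtain ⟨x, hxP, hxO⟩ := Set.not_subset.1 hm
    exact ⟨m, x, hxP, by simpa [mem_closedBall, dist_zero_right, not_le] using hxO⟩
  choose m xw hxwP hxwn using hseq
  set σ : ℕ → ℝ := fun j => sSup ((fun x => ‖x‖) '' P (m j)) with hσdef
  have hPne : ∀ j, (P (m j)).Nonempty := fun j => ⟨0, interior_subset (hP0 _)⟩
  have hbdd : ∀ j, BddAbove ((fun x => ‖x‖) '' P (m j)) := by
    intro j; obtain ⟨C, hC⟩ := isBounded_iff_forall_norm_le.1 (hPbd (m j))
    exact ⟨C, by rintro r ⟨x, hx, rfl⟩; exact hC x hx⟩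
  have hσub : ∀ j, ∀ x ∈ P (m j), ‖x‖ ≤ σ j := fun j x hx => le_csSup (hbdd j) ⟨x, hx, rfl⟩
  have hσlb : ∀ j : ℕ, (j + 1 : ℝ) < σ j := fun j => lt_of_lt_of_le (hxwn j) (hσub j _ (hxwP j))
  have hσpos : ∀ j, 0 < σ j := fun j => lt_of_le_of_lt (by positivity) (hσlb j)
  have hσ1 : ∀ j, 1 ≤ σ j := by
    intro j
    have := hσlb j
    have : (0:ℝ) ≤ (j:ℝ) := Nat.cast_nonneg j
    linarith [hσlb j]
  -- a near-sup point
  have hxs : ∀ j, ∃ x ∈ P (m j), σ j / 2 < ‖x‖ := by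
    intro j
    obtain ⟨r, ⟨x, hx, rfl⟩, hr⟩ := exists_lt_of_lt_csSup ((hPne j).image _) (half_lt_self (hσpos j))
    exact ⟨x, hx, hr⟩
  choose xs hxsP hxsn using hxs
  set γ : ℕ → Fin N → ℝ := fun j k => min (b (m j) k) (σ j) / σ j with hγdef
  have hγ0 : ∀ j k, 0 ≤ γ j k := fun j k => div_nonneg (le_min (hb0 _ _) (hσpos j).le) (hσpos j).le
  have hγ1 : ∀ j k, γ j k ≤ 1 := fun j k => by
    rw [hγdef, div_le_one (hσpos j)]; exact min_le_right _ _
  have hγσ : ∀ j k, γ j k * σ j = min (b (m j) k) (σ j) := fun j k =>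
    div_mul_cancel₀ _ (hσpos j).ne'
  have hkey : ∀ j, ∀ x ∈ P (m j), ∀ k, (inner ℝ x (u k) : ℝ) ≤ γ j k * σ j := by
    intro j x hx k
    have h1 : (inner ℝ x (u k) : ℝ) ≤ b (m j) k := by
      rw [hPdef] at hx; exact mem_iInter.1 hx k
    have h2 : (inner ℝ x (u k) : ℝ) ≤ σ j := by
      have := real_inner_le_norm x (u k)
      rw [hu k, mul_one] at this
      exact this.trans (hσub j x hx)
    rw [hγσ]; exact le_min h1 h2
  have hbigγ : ∀ j, ∃ k, c / 2 ≤ γ j k := by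
    intro j
    obtain ⟨k, -, hk⟩ := hcs (xs j)
    have h3 := hkey j _ (hxsP j) k
    have h4 : c * (σ j / 2) ≤ c * ‖xs j‖ := mul_le_mul_of_nonneg_left (hxsn j).le hc.le
    have h5 : (c / 2) * σ j ≤ γ j k * σ j := by linarith
    exact ⟨k, le_of_mul_le_mul_right h5 (hσpos j)⟩
  -- compactness of [0,1]^N
  have hmemIcc : ∀ j, γ j ∈ Icc (0 : Fin N → ℝ) 1 := fun j => ⟨fun k => hγ0 j k, fun k => hγ1 j k⟩
  obtain ⟨gl, hglIcc, φ, hφ, hglconv⟩ :=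
    (isCompact_Icc (a := (0 : Fin N → ℝ)) (b := 1)).tendsto_subseq hmemIcc
  have hglconv' : ∀ k, Tendsto (fun j => γ (φ j) k) atTop (nhds (gl k)) := fun k =>
    tendsto_pi_nhds.1 hglconv k
  have hgl0 : ∀ k, 0 ≤ gl k := fun k => hglIcc.1 k
  have hbig : ∃ k, c / 2 ≤ gl k := by
    by_contra hb; push_neg at hb
    have hev : ∀ᶠ j in atTop, ∀ k, γ (φ j) k < c / 2 :=
      eventually_all.2 fun k => (hglconv' k).eventually_lt_const (hb k)
    obtain ⟨j, hj⟩ := hev.exists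
    obtain ⟨k, hk⟩ := hbigγ (φ j)
    exact absurd hk (not_le.2 (hj k))
  set K : Finset (Fin N) := Finset.univ.filter (fun k => gl k = 0) with hKdef
  -- MAIN CLAIM: no vector is strictly separated from all the degenerate normals
  have claim : ∀ x0 : EuclideanSpace ℝ (Fin n), ¬ (∀ k ∈ K, (inner ℝ x0 (u k) : ℝ) < 0) := by
    intro x0 hx0
    set a : ℝ := if hK : K.Nonempty then min 1 (K.inf' hK fun k => -(inner ℝ x0 (u k) : ℝ)) else 1
      with hadef
    have ha0 : 0 < a := by
      rw [hadef]
      split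
      · rename_i hK
        refine lt_min one_pos ?_
        rw [Finset.lt_inf'_iff]
        intro k hk
        linarith [hx0 k hk]
      · exact one_pos
    have hka : ∀ k ∈ K, (inner ℝ x0 (u k) : ℝ) ≤ -a := by
      intro k hk
      have hKne : K.Nonempty := ⟨k, hk⟩
      rw [hadef, dif_pos hKne]
      have h1 : min 1 (K.inf' hKne fun k => -(inner ℝ x0 (u k) : ℝ)) ≤ -(inner ℝ x0 (u k) : ℝ) :=
        (min_le_right _ _).trans (Finset.inf'_le _ hk)
      linarith
    set Kc : Finset (Fin N) := Finset.univ.filter (fun k => gl k ≠ 0) with hKcdef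
    have hKcne : Kc.Nonempty := by
      obtain ⟨k0, hk0⟩ := hbig
      exact ⟨k0, by simp [hKcdef]; intro h; rw [h] at hk0; linarith⟩
    set g : ℝ := Kc.inf' hKcne gl with hgdef
    have hg : 0 < g := by
      rw [hgdef, Finset.lt_inf'_iff]
      intro k hk
      have hne : gl k ≠ 0 := by simpa [hKcdef] using hk
      exact lt_of_le_of_ne (hgl0 k) (Ne.symm hne)
    have hgle : ∀ k, k ∉ K → g ≤ gl k := by
      intro k hk
      refine Finset.inf'_le _ ?_
      simp only [hKcdef, Finset.mem_filter, Finset.mem_univ, true_and]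
      simpa [hKdef] using hk
    have hden : (0:ℝ) < ‖x0‖ + a / 2 := by positivity
    set ε : ℝ := g / 4 / (‖x0‖ + a / 2) with hεdef
    have hε : 0 < ε := div_pos (by positivity) hden
    have hεid : ε * (‖x0‖ + a / 2) = g / 4 := div_mul_cancel₀ _ hden.ne'
    set δ : ℝ := ε * a / 2 with hδdef
    have hδ : 0 < δ := by positivity
    set U : Set (EuclideanSpace ℝ (Fin n)) := ball (ε • x0) δ with hUdef
    set v0 : ENNReal := volume U with hv0def
    have hv0 : 0 < v0 := measure_ball_pos _ _ hδ
    have hv0top : v0 ≠ ⊤ := measure_ball_lt_top.ne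
    have hev : ∀ᶠ j in atTop, ∀ k, k ∉ K → g / 2 < γ (φ j) k := by
      refine eventually_all.2 fun k => ?_
      by_cases hk : k ∈ K
      · filter_upwards with j h
        exact absurd hk h
      · have h1 : g / 2 < gl k := lt_of_lt_of_le (by linarith) (hgle k hk)
        filter_upwards [(hglconv' k).eventually_const_lt h1] with j hj h
        exact hj
    obtain ⟨J, hJ⟩ := eventually_atTop.1 hev
    set Mn : ℕ := ⌈(v0⁻¹).toReal⌉₊ with hMndef
    set j : ℕ := max J Mn with hjdef
    have hjev := hJ j (le_max_left _ _)
    -- the scaled ball sits inside the polytope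
    have hsub : σ (φ j) • U ⊆ P (m (φ j)) := by
      rintro _ ⟨z, hz, rfl⟩
      rw [hPdef]
      refine mem_iInter.2 fun k => ?_
      show (inner ℝ (σ (φ j) • z) (u k) : ℝ) ≤ b (m (φ j)) k
      rw [real_inner_smul_left]
      have hzk : (inner ℝ z (u k) : ℝ) ≤ γ (φ j) k := by
        have hznorm : ‖z - ε • x0‖ < δ := by
          rw [← dist_eq_norm]
          exact mem_ball.1 hz
        by_cases hk : k ∈ K
        · have h1 : (inner ℝ (ε • x0) (u k) : ℝ) ≤ ε * (-a) := by
            rw [real_inner_smul_left]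
            exact mul_le_mul_of_nonneg_left (hka k hk) hε.le
          have h2 : (inner ℝ (z - ε • x0) (u k) : ℝ) ≤ ‖z - ε • x0‖ := by
            have := real_inner_le_norm (z - ε • x0) (u k)
            rwa [hu k, mul_one] at this
          have h4 : (inner ℝ z (u k) : ℝ) =
              (inner ℝ (ε • x0) (u k) : ℝ) + (inner ℝ (z - ε • x0) (u k) : ℝ) := by
            rw [← inner_add_left]
            congr 1
            abel
          have h5 : (inner ℝ z (u k) : ℝ) < 0 := by
            rw [h4, hδdef] at *
            nlinarith
          linarith [hγ0 (φ j) k]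
        · have h2 : (inner ℝ z (u k) : ℝ) ≤ ‖z‖ := by
            have := real_inner_le_norm z (u k)
            rwa [hu k, mul_one] at this
          have h3 : ‖z‖ ≤ ‖ε • x0‖ + ‖z - ε • x0‖ := by
            have : z = ε • x0 + (z - ε • x0) := by abel
            calc ‖z‖ = ‖ε • x0 + (z - ε • x0)‖ := by rw [← this]
              _ ≤ _ := norm_add_le _ _
          have h4 : ‖ε • x0‖ = ε * ‖x0‖ := by
            rw [norm_smul, Real.norm_eq_abs, abs_of_pos hε]
          have h6 : (inner ℝ z (u k) : ℝ) ≤ g / 4 := by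
            rw [← hεid]
            rw [h4] at h3
            rw [hδdef] at hznorm
            nlinarith
          linarith [hjev k hk]
      calc σ (φ j) * (inner ℝ z (u k) : ℝ) ≤ σ (φ j) * γ (φ j) k :=
            mul_le_mul_of_nonneg_left hzk (hσpos _).le
        _ = γ (φ j) k * σ (φ j) := mul_comm _ _
        _ = min (b (m (φ j)) k) (σ (φ j)) := hγσ _ _
        _ ≤ b (m (φ j)) k := min_le_left _ _
    -- volume contradiction
    have hμ : volume (σ (φ j) • U) ≤ 1 := by
      rw [← hvol (m (φ j))]
      exact measure_mono hsub
    rw [Measure.addHaar_smul, finrank_euclideanSpace_fin] at hμ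
    have hσj1 : 1 ≤ σ (φ j) := hσ1 _
    have habs : |σ (φ j) ^ n| = σ (φ j) ^ n := abs_of_pos (pow_pos (hσpos _) n)
    rw [habs] at hμ
    have hpow : σ (φ j) ≤ σ (φ j) ^ n := le_self_pow₀ hσj1 (by omega)
    have hlt : v0⁻¹ < ENNReal.ofReal (σ (φ j)) := by
      have h1 : (v0⁻¹).toReal < σ (φ j) := by
        have h2 : (v0⁻¹).toReal ≤ (Mn : ℝ) := Nat.le_ceil _
        have h3 : (Mn : ℝ) ≤ (j : ℝ) := Nat.cast_le.2 (le_max_right _ _)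
        have h4 : (j : ℝ) ≤ (φ j : ℝ) := Nat.cast_le.2 hφ.le_apply
        have h5 := hσlb (φ j)
        linarith
      calc v0⁻¹ = ENNReal.ofReal ((v0⁻¹).toReal) :=
            (ENNReal.ofReal_toReal (by simp [hv0.ne'])).symm
        _ < ENNReal.ofReal (σ (φ j)) :=
            (ENNReal.ofReal_lt_ofReal_iff (lt_of_le_of_lt ENNReal.toReal_nonneg h1)).2 h1
    have hcontra : (1 : ENNReal) < ENNReal.ofReal (σ (φ j) ^ n) * v0 := by
      calc (1 : ENNReal) = v0⁻¹ * v0 := (ENNReal.inv_mul_cancel hv0.ne' hv0top).symm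
        _ < ENNReal.ofReal (σ (φ j)) * v0 := ENNReal.mul_lt_mul_left hv0.ne' hv0top hlt
        _ ≤ ENNReal.ofReal (σ (φ j) ^ n) * v0 :=
            mul_le_mul_left (ENNReal.ofReal_le_ofReal hpow) _
    exact absurd hμ (not_le.2 hcontra)
  -- Gordan: 0 is in the convex hull of the degenerate normals
  have hGordan : (0 : EuclideanSpace ℝ (Fin n)) ∈
      convexHull ℝ (↑(K.image u) : Set (EuclideanSpace ℝ (Fin n))) := by
    by_contra h0
    have hcompact : IsCompact (convexHull ℝ (↑(K.image u) : Set (EuclideanSpace ℝ (Fin n)))) :=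
      (K.image u).finite_toSet.isCompact_convexHull ℝ
    obtain ⟨f, t, hft, hfb⟩ :=
      geometric_hahn_banach_point_closed (convex_convexHull ℝ _) hcompact.isClosed h0
    have hf0 : f 0 = 0 := map_zero f
    refine claim (-(InnerProductSpace.toDual ℝ (EuclideanSpace ℝ (Fin n))).symm f) ?_
    intro k hk
    have hy : u k ∈ convexHull ℝ (↑(K.image u) : Set (EuclideanSpace ℝ (Fin n))) :=
      subset_convexHull _ _ (by exact_mod_cast Finset.mem_image_of_mem u hk)
    have hfk := hfb _ hy
    rw [inner_neg_left, InnerProductSpace.toDual_symm_apply]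
    linarith
  rw [Finset.convexHull_eq] at hGordan
  obtain ⟨w, hw0, hw1, hwc⟩ := hGordan
  have hwc' : ∑ y ∈ K.image u, w y • y = 0 := by
    have h := Finset.centerMass_eq_of_sum_1 (K.image u) (w := w) id hw1
    rw [hwc] at h
    simpa using h.symm
  set T : Finset (EuclideanSpace ℝ (Fin n)) := (K.image u).filter (fun y => 0 < w y) with hTdef
  have hwT1 : ∑ y ∈ T, w y = 1 := by
    rw [hTdef, Finset.sum_filter_of_ne, hw1]
    intro y hy hne
    exact lt_of_le_of_ne (hw0 y hy) (Ne.symm hne)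
  have hwTc : ∑ y ∈ T, w y • y = 0 := by
    rw [hTdef, Finset.sum_filter_of_ne, hwc']
    intro y hy hne
    have : w y ≠ 0 := fun h => hne (by rw [h, zero_smul])
    exact lt_of_le_of_ne (hw0 y hy) (Ne.symm this)
  have hTne : T.Nonempty := Finset.nonempty_of_sum_ne_zero (by rw [hwT1]; exact one_ne_zero)
  have hTprop : ∀ y ∈ T, ∃ k, u k = y ∧ gl k = 0 := by
    intro y hy
    obtain ⟨k, hk, hky⟩ := Finset.mem_image.1 (Finset.mem_filter.1 hy).1
    exact ⟨k, hky, by simpa [hKdef] using hk⟩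
  set X : Submodule ℝ (EuclideanSpace ℝ (Fin n)) :=
    Submodule.span ℝ (T : Set (EuclideanSpace ℝ (Fin n))) with hXdef
  have hzero_of_nonpos : ∀ x, x ∈ X → (∀ y ∈ T, (inner ℝ x y : ℝ) ≤ 0) → x = 0 := by
    intro x hxX hneg
    have hsum : ∑ y ∈ T, w y * (inner ℝ x y : ℝ) = 0 := by
      calc ∑ y ∈ T, w y * (inner ℝ x y : ℝ) = ∑ y ∈ T, (inner ℝ x (w y • y) : ℝ) :=
            Finset.sum_congr rfl (fun y _ => (real_inner_smul_right _ _ _).symm)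
        _ = (inner ℝ x (∑ y ∈ T, w y • y) : ℝ) := (inner_sum _ _ _).symm
        _ = 0 := by rw [hwTc, inner_zero_right]
    have hall : ∀ y ∈ T, w y * (inner ℝ x y : ℝ) = 0 := by
      refine (Finset.sum_eq_zero_iff_of_nonpos ?_).1 hsum
      intro y hy
      have hwpos : 0 < w y := (Finset.mem_filter.1 hy).2
      exact mul_nonpos_iff.2 (Or.inl ⟨hwpos.le, hneg y hy⟩)
    have hperp : ∀ y ∈ T, (inner ℝ x y : ℝ) = 0 := by
      intro y hy
      have hwpos : 0 < w y := (Finset.mem_filter.1 hy).2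
      exact (mul_eq_zero.1 (hall y hy)).resolve_left hwpos.ne'
    have hxx : (inner ℝ x x : ℝ) = 0 := by
      refine Submodule.span_induction (p := fun v _ => (inner ℝ x v : ℝ) = 0) ?_ ?_ ?_ ?_ hxX
      · intro y hy; exact hperp y hy
      · exact inner_zero_right x
      · intro v1 v2 _ _ h1 h2; rw [inner_add_right, h1, h2, add_zero]
      · intro r v _ h1; rw [real_inner_smul_right, h1, mul_zero]
    exact inner_self_eq_zero.1 hxx
  by_cases hX : X = ⊤
  · -- degenerate normals positively span everything : contradiction with near-sup points
    have hTpos : ∀ x : EuclideanSpace ℝ (Fin n), x ≠ 0 → ∃ y ∈ T, 0 < (inner ℝ x (id y) : ℝ) := by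
      intro x hx
      by_contra hcc; push_neg at hcc
      refine hx (hzero_of_nonpos x ?_ ?_)
      · rw [hX]; exact Submodule.mem_top
      · simpa using hcc
    obtain ⟨c2, hc2, hcs2⟩ := aux_pos_span T id hTpos
    have hev2 : ∀ᶠ j in atTop, ∀ k, gl k = 0 → γ (φ j) k < c2 / 2 := by
      refine eventually_all.2 fun k => ?_
      by_cases hk : gl k = 0
      · have h1 : Tendsto (fun j => γ (φ j) k) atTop (nhds 0) := by
          rw [← hk]; exact hglconv' k
        filter_upwards [Tendsto.eventually_lt_const (half_pos hc2) h1] with j hj h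
        exact hj
      · filter_upwards with j h
        exact absurd h hk
    obtain ⟨j, hj⟩ := hev2.exists
    obtain ⟨y, hyT, hy⟩ := hcs2 (xs (φ j))
    obtain ⟨k, rfl, hk0⟩ := hTprop y hyT
    have h3 := hkey (φ j) _ (hxsP (φ j)) k
    have h4 := hj k hk0
    have hσp := hσpos (φ j)
    have hxn := hxsn (φ j)
    simp only [id_eq] at hy
    have hm1 : γ (φ j) k * σ (φ j) < c2 / 2 * σ (φ j) := mul_lt_mul_of_pos_right h4 hσp
    have hm2 : c2 * (σ (φ j) / 2) < c2 * ‖xs (φ j)‖ := mul_lt_mul_of_pos_left hxn hc2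
    linarith
  · -- proper essential subspace : contradiction with hnoess
    have hfr1 : 1 ≤ Module.finrank ℝ X := by
      obtain ⟨y, hyT⟩ := hTne
      obtain ⟨k, hky, -⟩ := hTprop y hyT
      have hy0 : y ≠ 0 := by
        intro h
        have := hu k
        rw [hky, h] at this
        simp at this
      have hne : (⟨y, Submodule.subset_span hyT⟩ : X) ≠ 0 := by
        intro h
        exact hy0 ((Submodule.mk_eq_zero _ _).1 h)
      have : 0 < Module.finrank ℝ X := Module.finrank_pos_iff_exists_ne_zero.2 ⟨_, hne⟩
      omega
    have hfr2 : Module.finrank ℝ X ≤ n - 1 := by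
      have h1 := Submodule.finrank_lt hX
      rw [finrank_euclideanSpace_fin] at h1
      omega
    obtain ⟨x, hxX, hx0, hxneg⟩ := hnoess X hfr1 hfr2
    apply hx0
    apply hzero_of_nonpos x hxX
    intro y hyT
    obtain ⟨k, rfl, -⟩ := hTprop y hyT
    exact hxneg k (Submodule.subset_span hyT)
end
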